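/- (Removal of the exceptional set, used in the proof of Theorem 3.3) Let h : (0,1) → [0,∞) be a nondecreasing function, let 0 < l < 1, K > 0, and let E ⊆ (0,1) be a measurable set with ∫_E dr/(1−r) < ∞. Suppose that h(r) ≤ K·(1−r)^{−l}·( log( e/(1−r) ) )^{l} for all r ∈ (0,1) \ E. Then for every l' with l < l' < 1 there exists a constant K' > 0 such that h(r) ≤ K'·(1−r)^{−l'} for all r ∈ (0,1). -/

import Mathlib

open MeasureTheory
open scoped ENNReal

lemma aux_pow (l l' : ℝ) (hl0 : 0 < l) (hll' : l < l') :
    ∃ C > 0, ∀ x ∈ Set.Ioo (0:ℝ) 1,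
      (x/2) ^ (-l) * (Real.log (2 * Real.exp 1 / x)) ^ l ≤ C * x ^ (-l') := by
  set δ := l' - l with hδdef
  have hδ : 0 < δ := by simp only [hδdef]; linarith
  set ε := δ / l with hεdef
  have hε : 0 < ε := div_pos hδ hl0
  refine ⟨2 ^ l * ((2 * Real.exp 1) ^ δ * ε ^ (-l)), by positivity, ?_⟩
  rintro x ⟨hx0, hx1⟩
  have he : (0:ℝ) < 2 * Real.exp 1 := by positivity
  have hexp1 : (1:ℝ) ≤ Real.exp 1 := Real.one_le_exp (by norm_num)
  have hy0 : (0:ℝ) < 2 * Real.exp 1 / x := by positivity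
  have hy1 : (1:ℝ) ≤ 2 * Real.exp 1 / x := by
    rw [le_div_iff₀ hx0]; nlinarith
  have hlog0 : 0 ≤ Real.log (2 * Real.exp 1 / x) := Real.log_nonneg hy1
  have hlog : Real.log (2 * Real.exp 1 / x) ≤ (2 * Real.exp 1 / x) ^ ε / ε :=
    Real.log_le_rpow_div hy0.le hε
  have hεl : ε * l = δ := by rw [hεdef]; exact div_mul_cancel₀ δ hl0.ne'
  have hxδ : (0:ℝ) < x ^ δ := Real.rpow_pos_of_pos hx0 δ
  have h2l : (0:ℝ) < (2:ℝ) ^ l := Real.rpow_pos_of_pos (by norm_num) l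
  have hεll : (0:ℝ) < ε ^ l := Real.rpow_pos_of_pos hε l
  calc (x/2) ^ (-l) * (Real.log (2 * Real.exp 1 / x)) ^ l
      ≤ (x/2) ^ (-l) * ((2 * Real.exp 1 / x) ^ ε / ε) ^ l := by
        gcongr
    _ = 2 ^ l * ((2 * Real.exp 1) ^ δ * ε ^ (-l)) * x ^ (-l') := by
        rw [Real.div_rpow hx0.le (by norm_num), Real.div_rpow (Real.rpow_nonneg hy0.le _) hε.le,
          ← Real.rpow_mul hy0.le, hεl, Real.div_rpow he.le hx0.le,
          Real.rpow_neg (by norm_num : (0:ℝ) ≤ 2), Real.rpow_neg hε.le,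
          show x ^ (-l') = x ^ (-l) * (x ^ δ)⁻¹ by
            rw [← Real.rpow_neg hx0.le, ← Real.rpow_add hx0]; rw [hδdef]; ring_nf]
        field_simp

/-- **Removal of the exceptional set.** Let `h : (0,1) → [0,∞)` be nondecreasing,
`0 < l < 1`, `K > 0`, and `E ⊆ (0,1)` measurable with `∫_E dr/(1−r) < ∞`. If
`h r ≤ K·(1−r)^{−l}·(log(e/(1−r)))^{l}` for all `r ∈ (0,1) \ E`, then for every
`l < l' < 1` there is `K' > 0` with `h r ≤ K'·(1−r)^{−l'}` for all `r ∈ (0,1)`. -/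
theorem removal_of_exceptional_set (h : ℝ → ℝ)
    (hmono : MonotoneOn h (Set.Ioo 0 1))
    (hnonneg : ∀ r ∈ Set.Ioo (0 : ℝ) 1, 0 ≤ h r)
    (l K : ℝ) (hl0 : 0 < l) (hl1 : l < 1) (hK : 0 < K)
    (E : Set ℝ) (hE : E ⊆ Set.Ioo 0 1) (hEm : MeasurableSet E)
    (hEfin : (∫⁻ r in E, ENNReal.ofReal (1 / (1 - r))) < ⊤)
    (hbound : ∀ r ∈ Set.Ioo (0 : ℝ) 1 \ E,
      h r ≤ K * (1 - r) ^ (-l) * (Real.log (Real.exp 1 / (1 - r))) ^ l) :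
    ∀ l' : ℝ, l < l' → l' < 1 →
      ∃ K' > 0, ∀ r ∈ Set.Ioo (0 : ℝ) 1, h r ≤ K' * (1 - r) ^ (-l') := by
  intro l' hll' hl'1
  obtain ⟨C, hC, hCb⟩ := aux_pow l l' hl0 hll'
  have hfm : Measurable (fun r : ℝ => ENNReal.ofReal (1 / (1 - r))) := by
    apply Measurable.ennreal_ofReal
    exact measurable_const.div (measurable_const.sub measurable_id)
  set ν : Measure ℝ := volume.withDensity (fun r => ENNReal.ofReal (1 / (1 - r))) with hν
  have hνs : ∀ s : Set ℝ, MeasurableSet s →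
      ν s = ∫⁻ r in s, ENNReal.ofReal (1 / (1 - r)) := fun s hs => withDensity_apply _ hs
  have hνE : ν E < ⊤ := by rw [hνs E hEm]; exact hEfin
  -- the tail of ν on E tends to zero
  have hmeas : ∀ n : ℕ, MeasurableSet (E ∩ Set.Ici (1 - 1/(n+1) : ℝ)) :=
    fun n => hEm.inter measurableSet_Ici
  have hanti : Antitone (fun n : ℕ => E ∩ Set.Ici (1 - 1/(n+1) : ℝ)) := by
    intro m n hmn
    apply Set.inter_subset_inter_right
    apply Set.Ici_subset_Ici.2
    have : (1:ℝ)/(n+1) ≤ 1/(m+1) := by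
      apply one_div_le_one_div_of_le (by positivity)
      exact_mod_cast by omega
    linarith
  have hiInter : (⋂ n : ℕ, E ∩ Set.Ici (1 - 1/(n+1) : ℝ)) = ∅ := by
    ext x
    simp only [Set.mem_iInter, Set.mem_empty_iff_false, iff_false, not_forall]
    by_contra hx
    push_neg at hx
    have hx1 : x < 1 := (hE (hx 0).1).2
    obtain ⟨n, hn⟩ := exists_nat_one_div_lt (by linarith : (0:ℝ) < 1 - x)
    have h2 := (hx n).2
    simp only [Set.mem_Ici] at h2
    linarith
  have htend := tendsto_measure_iInter_atTop (μ := ν)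
    (fun n => (hmeas n).nullMeasurableSet) hanti
    ⟨0, ((measure_mono Set.inter_subset_left).trans_lt hνE).ne⟩
  rw [hiInter, measure_empty] at htend
  have hev := htend.eventually_lt_const
    (show (0:ℝ≥0∞) < ENNReal.ofReal (1/2) from ENNReal.ofReal_pos.2 (by norm_num))
  obtain ⟨n, hn⟩ := hev.exists
  simp only [Function.comp_apply] at hn
  set r₀ : ℝ := max (1 - 1/(n+1)) (1/2) with hr₀def
  have hr₀0 : (0:ℝ) < r₀ := lt_of_lt_of_le (by norm_num) (le_max_right _ _)
  have hr₀1 : r₀ < 1 := by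
    apply max_lt _ (by norm_num)
    have : (0:ℝ) < 1/(n+1) := by positivity
    linarith
  -- key bound on (r₀, 1)
  have key : ∀ r ∈ Set.Ioo r₀ 1, h r ≤ K * C * (1 - r) ^ (-l') := by
    rintro r ⟨hrr₀, hr1⟩
    have hr0 : 0 < r := lt_trans hr₀0 hrr₀
    have hx0 : (0:ℝ) < 1 - r := by linarith
    set m : ℝ := (1 + r)/2 with hmdef
    have hrm : r < m := by rw [hmdef]; linarith
    have hm1 : m < 1 := by rw [hmdef]; linarith
    have hs : ∃ s ∈ Set.Ioo r m, s ∉ E := by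
      by_contra hcon
      push_neg at hcon
      have hsub : Set.Ioo r m ⊆ E ∩ Set.Ici (1 - 1/(n+1) : ℝ) := by
        rintro t ⟨ht1, ht2⟩
        refine ⟨hcon t ⟨ht1, ht2⟩, ?_⟩
        have : (1:ℝ) - 1/(n+1) ≤ r₀ := le_max_left _ _
        simp only [Set.mem_Ici]
        linarith
      have h1 : ENNReal.ofReal (1/2) ≤ ν (Set.Ioo r m) := by
        rw [hνs _ measurableSet_Ioo]
        calc ENNReal.ofReal (1/2)
            = ENNReal.ofReal (1/(1-r)) * volume (Set.Ioo r m) := by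
              rw [Real.volume_Ioo, ← ENNReal.ofReal_mul (by positivity)]
              congr 1
              rw [hmdef]
              field_simp
              ring
          _ = ∫⁻ _ in Set.Ioo r m, ENNReal.ofReal (1/(1-r)) := (setLIntegral_const _ _).symm
          _ ≤ ∫⁻ t in Set.Ioo r m, ENNReal.ofReal (1/(1-t)) := by
              apply setLIntegral_mono hfm
              rintro t ⟨ht1, ht2⟩
              apply ENNReal.ofReal_le_ofReal
              apply one_div_le_one_div_of_le (by linarith)
              linarith
      exact absurd (h1.trans (measure_mono hsub)) (not_le.2 hn)
    obtain ⟨s, ⟨hrs, hsm⟩, hsE⟩ := hs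
    have hs01 : s ∈ Set.Ioo (0:ℝ) 1 := ⟨lt_trans hr0 hrs, lt_trans hsm hm1⟩
    have h1s : 0 < 1 - s := by linarith [hs01.2]
    have hhalf : (1 - r)/2 ≤ 1 - s := by
      rw [hmdef] at hsm; linarith
    have hexp1 : (1:ℝ) ≤ Real.exp 1 := Real.one_le_exp (by norm_num)
    have hA : (1-s) ^ (-l) ≤ ((1-r)/2) ^ (-l) :=
      Real.rpow_le_rpow_of_nonpos (by linarith) hhalf (by linarith)
    have hlog_le : Real.log (Real.exp 1/(1-s)) ≤ Real.log (2*Real.exp 1/(1-r)) := by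
      apply Real.log_le_log (by positivity)
      rw [div_le_div_iff₀ h1s hx0]
      nlinarith [Real.exp_pos 1]
    have hlog_nonneg : 0 ≤ Real.log (Real.exp 1/(1-s)) := by
      apply Real.log_nonneg
      rw [le_div_iff₀ h1s]
      nlinarith
    have hB : (Real.log (Real.exp 1/(1-s))) ^ l ≤ (Real.log (2*Real.exp 1/(1-r))) ^ l :=
      Real.rpow_le_rpow hlog_nonneg hlog_le hl0.le
    have hCx := hCb (1-r) ⟨hx0, by linarith⟩
    calc h r ≤ h s := hmono ⟨hr0, hr1⟩ hs01 hrs.le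
      _ ≤ K * (1-s) ^ (-l) * (Real.log (Real.exp 1/(1-s))) ^ l := hbound s ⟨hs01, hsE⟩
      _ ≤ K * (((1-r)/2) ^ (-l)) * (Real.log (2*Real.exp 1/(1-r))) ^ l := by
          have h1 : K * (1-s) ^ (-l) ≤ K * ((1-r)/2) ^ (-l) :=
            mul_le_mul_of_nonneg_left hA hK.le
          apply mul_le_mul h1 hB (Real.rpow_nonneg hlog_nonneg l)
          positivity
      _ = K * (((1-r)/2) ^ (-l) * (Real.log (2*Real.exp 1/(1-r))) ^ l) := by ring
      _ ≤ K * (C * (1-r) ^ (-l')) := by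
          apply mul_le_mul_of_nonneg_left hCx hK.le
      _ = K * C * (1-r) ^ (-l') := by ring
  -- finish
  set r₁ : ℝ := (r₀ + 1)/2 with hr₁def
  have hr₁ : r₁ ∈ Set.Ioo r₀ 1 := ⟨by rw [hr₁def]; linarith, by rw [hr₁def]; linarith⟩
  have hr₁01 : r₁ ∈ Set.Ioo (0:ℝ) 1 := ⟨lt_trans hr₀0 hr₁.1, hr₁.2⟩
  have hM : 0 < K * C * (1 - r₁) ^ (-l') := by
    have : (0:ℝ) < 1 - r₁ := by linarith [hr₁.2]
    positivity
  refine ⟨max (K*C) (K*C*(1-r₁) ^ (-l')), lt_max_of_lt_left (by positivity), ?_⟩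
  rintro r ⟨hrr0, hrr1⟩
  have hxpos : (0:ℝ) < 1 - r := by linarith
  have hxnn : (0:ℝ) ≤ (1-r) ^ (-l') := Real.rpow_nonneg hxpos.le _
  rcases le_or_gt r r₀ with hle | hlt
  · have h1 : h r ≤ h r₁ := hmono ⟨hrr0, hrr1⟩ hr₁01 (hle.trans (le_of_lt hr₁.1))
    have h2 := key r₁ hr₁
    have h3 : (1:ℝ) ≤ (1-r) ^ (-l') :=
      Real.one_le_rpow_of_pos_of_le_one_of_nonpos hxpos (by linarith) (by linarith)
    calc h r ≤ K*C*(1-r₁) ^ (-l') := h1.trans h2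
      _ = (K*C*(1-r₁) ^ (-l')) * 1 := by ring
      _ ≤ max (K*C) (K*C*(1-r₁) ^ (-l')) * ((1-r) ^ (-l')) :=
          mul_le_mul (le_max_right _ _) h3 (by norm_num) (le_trans hM.le (le_max_right _ _))
  · calc h r ≤ K*C*(1-r) ^ (-l') := key r ⟨hlt, hrr1⟩
      _ ≤ max (K*C) (K*C*(1-r₁) ^ (-l')) * (1-r) ^ (-l') :=
          mul_le_mul_of_nonneg_right (le_max_left _ _) hxnn
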